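/- For all integers s1, s2 ≥ 1 with s1+s2 > 2, setting s = s1+s2−2, one has in ℚ⟦q⟧: (binom(s, s1−1)/s)·d[s] = [s1]·[s2] + binom(s, s1−1)·[s+1] − ∑_{a+b=s+2, a,b ≥ 1} (binom(a−1, s1−1) + binom(a−1, s2−1))·[a,b]. -/

import Mathlib

open Finset

open Classical in
/-- The bi-bracket `[s₁,…,s_l; r₁,…,r_l] ∈ ℚ⟦q⟧`. -/
noncomputable def biBracket {l : ℕ} (s r : Fin l → ℕ) : PowerSeries ℚ :=
  PowerSeries.mk fun n =>
    ∑ u : Fin l → Fin (n + 1), ∑ v : Fin l → Fin (n + 1),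
      if (∀ i j : Fin l, i < j → (u j : ℕ) < (u i : ℕ)) ∧ (∀ j, 0 < (u j : ℕ)) ∧
          (∀ j, 0 < (v j : ℕ)) ∧ (∑ j, (u j : ℕ) * (v j : ℕ)) = n
      then ∏ j, (u j : ℚ) ^ (r j) / (Nat.factorial (r j)) *
            ((v j : ℚ) ^ (s j - 1) / (Nat.factorial (s j - 1)))
      else 0

/-- The bracket `[s₁,…,s_l] ∈ ℚ⟦q⟧` (for `l = 0` this is `1`). -/
noncomputable def bracket {l : ℕ} (s : Fin l → ℕ) : PowerSeries ℚ :=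
  biBracket s 0

/-- The operator `d = q·d/dq` on `ℚ⟦q⟧`, sending `∑ aₙ qⁿ` to `∑ n·aₙ qⁿ`. -/
noncomputable def qd (f : PowerSeries ℚ) : PowerSeries ℚ :=
  PowerSeries.mk fun n => (n : ℚ) * PowerSeries.coeff n f

/- ## Auxiliary index sets -/

def S1 (n : ℕ) : Finset (ℕ × ℕ) :=
  (range (n+1) ×ˢ range (n+1)).filter fun p => 0 < p.1 ∧ 0 < p.2 ∧ p.1 * p.2 = n

lemma mem_S1 {n : ℕ} {p : ℕ × ℕ} : p ∈ S1 n ↔ 0 < p.1 ∧ 0 < p.2 ∧ p.1 * p.2 = n := by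
  simp only [S1, mem_filter, mem_product, mem_range, Nat.lt_succ_iff]
  constructor
  · rintro ⟨-, h⟩; exact h
  · rintro ⟨h1, h2, h3⟩
    exact ⟨⟨h3 ▸ Nat.le_mul_of_pos_right _ h2, h3 ▸ Nat.le_mul_of_pos_left _ h1⟩, h1, h2, h3⟩

def Q (n : ℕ) : Finset ((ℕ × ℕ) × ℕ × ℕ) :=
  ((range (n+1) ×ˢ range (n+1)) ×ˢ (range (n+1) ×ˢ range (n+1))).filter fun p =>
    0 < p.1.1 ∧ 0 < p.1.2 ∧ 0 < p.2.1 ∧ 0 < p.2.2 ∧ p.1.1 * p.1.2 + p.2.1 * p.2.2 = n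

lemma mem_Q {n : ℕ} {p : (ℕ × ℕ) × ℕ × ℕ} : p ∈ Q n ↔
    0 < p.1.1 ∧ 0 < p.1.2 ∧ 0 < p.2.1 ∧ 0 < p.2.2 ∧ p.1.1 * p.1.2 + p.2.1 * p.2.2 = n := by
  simp only [Q, mem_filter, mem_product, mem_range, Nat.lt_succ_iff]
  constructor
  · rintro ⟨-, h⟩; exact h
  · rintro ⟨h1, h2, h3, h4, h5⟩
    have b1 : p.1.1 * p.1.2 ≤ n := h5 ▸ Nat.le_add_right _ _
    have b2 : p.2.1 * p.2.2 ≤ n := h5 ▸ Nat.le_add_left _ _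
    exact ⟨⟨⟨le_trans (Nat.le_mul_of_pos_right _ h2) b1, le_trans (Nat.le_mul_of_pos_left _ h1) b1⟩,
      le_trans (Nat.le_mul_of_pos_right _ h4) b2, le_trans (Nat.le_mul_of_pos_left _ h3) b2⟩,
      h1, h2, h3, h4, h5⟩

def Qlt (n : ℕ) : Finset ((ℕ × ℕ) × ℕ × ℕ) := (Q n).filter fun p => p.2.1 < p.1.1
def Qvlt (n : ℕ) : Finset ((ℕ × ℕ) × ℕ × ℕ) := (Q n).filter fun p => p.1.2 < p.2.2
def Qvgt (n : ℕ) : Finset ((ℕ × ℕ) × ℕ × ℕ) := (Q n).filter fun p => p.2.2 < p.1.2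
def Qveq (n : ℕ) : Finset ((ℕ × ℕ) × ℕ × ℕ) := (Q n).filter fun p => p.1.2 = p.2.2

lemma mem_Qlt {n p} : p ∈ Qlt n ↔ p ∈ Q n ∧ p.2.1 < p.1.1 := Finset.mem_filter
lemma mem_Qvlt {n p} : p ∈ Qvlt n ↔ p ∈ Q n ∧ p.1.2 < p.2.2 := Finset.mem_filter
lemma mem_Qvgt {n p} : p ∈ Qvgt n ↔ p ∈ Q n ∧ p.2.2 < p.1.2 := Finset.mem_filter
lemma mem_Qveq {n p} : p ∈ Qveq n ↔ p ∈ Q n ∧ p.1.2 = p.2.2 := Finset.mem_filter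

/- ## Coefficient extraction -/

lemma sum_pi_one {M β : Type*} [AddCommMonoid M] [Fintype β] (F : (Fin (Nat.succ 0) → β) → M)
    (G : β → M) (h : ∀ u, F u = G (u 0)) : ∑ u, F u = ∑ x : β, G x :=
  Fintype.sum_equiv (Equiv.funUnique (Fin (Nat.succ 0)) β) F G h

lemma sum_pi_two {M β : Type*} [AddCommMonoid M] [Fintype β]
    (F : (Fin (Nat.succ (Nat.succ 0)) → β) → M)
    (G : β → β → M) (h : ∀ u, F u = G (u 0) (u 1)) : ∑ u, F u = ∑ x : β, ∑ y : β, G x y := by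
  rw [Fintype.sum_equiv (piFinTwoEquiv (fun _ => β)) F (fun p => G p.1 p.2) h,
    Fintype.sum_prod_type]

lemma coeff_bracket_one (k n : ℕ) :
    PowerSeries.coeff n (bracket ![k]) =
      ∑ p ∈ S1 n, (p.2 : ℚ) ^ (k - 1) / (Nat.factorial (k - 1)) := by
  rw [bracket, biBracket, PowerSeries.coeff_mk]
  rw [sum_pi_one _ (fun x : Fin (n+1) => ∑ v : Fin (Nat.succ 0) → Fin (n+1),
      if (0 < (x : ℕ)) ∧ (0 < (v 0 : ℕ)) ∧ ((x : ℕ) * (v 0 : ℕ)) = n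
      then (x : ℚ) ^ (0:ℕ) / (Nat.factorial 0) * ((v 0 : ℚ) ^ (k - 1) / (Nat.factorial (k - 1)))
      else 0) (by
    intro u
    apply Finset.sum_congr rfl
    intro v _
    congr 1
    · simp only [eq_iff_iff]
      constructor
      · rintro ⟨-, h2, h3, h4⟩
        exact ⟨h2 0, h3 0, by simpa using h4⟩
      · rintro ⟨h2, h3, h4⟩
        refine ⟨fun i j hij => absurd (Subsingleton.elim i j) (ne_of_lt hij), ?_, ?_, by simpa using h4⟩
        · intro j; rw [Subsingleton.elim j 0]; exact h2
        · intro j; rw [Subsingleton.elim j 0]; exact h3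
    · rw [Fin.prod_univ_one]; rfl)]
  rw [Finset.sum_congr rfl (fun (x : Fin (n+1)) _ => sum_pi_one _ (fun y : Fin (n+1) =>
      if (0 < (x : ℕ)) ∧ (0 < (y : ℕ)) ∧ ((x : ℕ) * (y : ℕ)) = n
      then (x : ℚ) ^ (0:ℕ) / (Nat.factorial 0) * ((y : ℚ) ^ (k - 1) / (Nat.factorial (k - 1)))
      else 0) (fun v => rfl))]
  rw [Fin.sum_univ_eq_sum_range (fun x => ∑ y : Fin (n+1),
      if (0 < x) ∧ (0 < (y:ℕ)) ∧ (x * (y:ℕ)) = n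
      then (x : ℚ) ^ (0:ℕ) / (Nat.factorial 0) * ((y : ℚ) ^ (k - 1) / (Nat.factorial (k - 1)))
      else 0)]
  rw [Finset.sum_congr rfl (fun x _ => Fin.sum_univ_eq_sum_range (fun y =>
      if (0 < x) ∧ (0 < y) ∧ (x * y) = n
      then (x : ℚ) ^ (0:ℕ) / (Nat.factorial 0) * ((y : ℚ) ^ (k - 1) / (Nat.factorial (k - 1)))
      else 0) (n+1))]
  rw [S1, Finset.sum_filter, Finset.sum_product]
  simp

lemma coeff_bracket_two (a b n : ℕ) :
    PowerSeries.coeff n (bracket ![a, b]) =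
      ∑ p ∈ Qlt n, (p.1.2 : ℚ) ^ (a - 1) / (Nat.factorial (a - 1)) *
        ((p.2.2 : ℚ) ^ (b - 1) / (Nat.factorial (b - 1))) := by
  rw [bracket, biBracket, PowerSeries.coeff_mk]
  rw [sum_pi_two _ (fun x0 x1 : Fin (n+1) => ∑ v : Fin (Nat.succ (Nat.succ 0)) → Fin (n+1),
      if ((x1 : ℕ) < (x0 : ℕ) ∧ 0 < (x0 : ℕ) ∧ 0 < (x1 : ℕ)) ∧ (0 < (v 0 : ℕ) ∧ 0 < (v 1 : ℕ)) ∧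
          ((x0 : ℕ) * (v 0 : ℕ) + (x1 : ℕ) * (v 1 : ℕ)) = n
      then ((v 0 : ℚ) ^ (a - 1) / (Nat.factorial (a - 1))) *
           ((v 1 : ℚ) ^ (b - 1) / (Nat.factorial (b - 1)))
      else 0) (by
    intro u
    apply Finset.sum_congr rfl
    intro v _
    congr 1
    · simp only [eq_iff_iff]
      constructor
      · rintro ⟨ho, h2, h3, h4⟩
        exact ⟨⟨ho 0 1 (by norm_num), h2 0, h2 1⟩, ⟨h3 0, h3 1⟩, by simpa [Fin.sum_univ_two] using h4⟩
      · rintro ⟨⟨ho, h0, h1'⟩, ⟨h3, h4⟩, h5⟩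
        refine ⟨?_, ?_, ?_, by simpa [Fin.sum_univ_two] using h5⟩
        · intro i j hij
          have hvi := i.isLt
          have hvj := j.isLt
          have hv : (i : ℕ) < (j : ℕ) := hij
          have hi0 : (i : ℕ) = 0 := by omega
          have hj1 : (j : ℕ) = 1 := by omega
          rw [show i = 0 from by rw [Fin.ext_iff, hi0]; rfl,
              show j = 1 from by rw [Fin.ext_iff, hj1]; rfl]
          exact ho
        · intro j
          match j with
          | 0 => exact h0
          | 1 => exact h1'
        · intro j
          match j with
          | 0 => exact h3
          | 1 => exact h4
    · rw [Fin.prod_univ_two]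
      simp [Matrix.cons_val_zero, Matrix.cons_val_one, Matrix.head_cons])]
  rw [Finset.sum_congr rfl (fun (x0 : Fin (n+1)) _ => Finset.sum_congr rfl
    (fun (x1 : Fin (n+1)) _ => sum_pi_two _ (fun y0 y1 : Fin (n+1) =>
      if ((x1 : ℕ) < (x0 : ℕ) ∧ 0 < (x0 : ℕ) ∧ 0 < (x1 : ℕ)) ∧ (0 < (y0 : ℕ) ∧ 0 < (y1 : ℕ)) ∧
          ((x0 : ℕ) * (y0 : ℕ) + (x1 : ℕ) * (y1 : ℕ)) = n
      then ((y0 : ℚ) ^ (a - 1) / (Nat.factorial (a - 1))) *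
           ((y1 : ℚ) ^ (b - 1) / (Nat.factorial (b - 1)))
      else 0) (fun v => rfl)))]
  -- now convert all four Fin sums to range sums
  have step : ∀ x0 x1 : Fin (n+1), (∑ y0 : Fin (n+1), ∑ y1 : Fin (n+1),
      if ((x1 : ℕ) < (x0 : ℕ) ∧ 0 < (x0 : ℕ) ∧ 0 < (x1 : ℕ)) ∧ (0 < (y0 : ℕ) ∧ 0 < (y1 : ℕ)) ∧
          ((x0 : ℕ) * (y0 : ℕ) + (x1 : ℕ) * (y1 : ℕ)) = n
      then ((y0 : ℚ) ^ (a - 1) / (Nat.factorial (a - 1))) *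
           ((y1 : ℚ) ^ (b - 1) / (Nat.factorial (b - 1)))
      else 0) = ∑ y0 ∈ range (n+1), ∑ y1 ∈ range (n+1),
      if ((x1 : ℕ) < (x0 : ℕ) ∧ 0 < (x0 : ℕ) ∧ 0 < (x1 : ℕ)) ∧ (0 < y0 ∧ 0 < y1) ∧
          ((x0 : ℕ) * y0 + (x1 : ℕ) * y1) = n
      then ((y0 : ℚ) ^ (a - 1) / (Nat.factorial (a - 1))) *
           ((y1 : ℚ) ^ (b - 1) / (Nat.factorial (b - 1)))
      else 0 := by
    intro x0 x1
    rw [Fin.sum_univ_eq_sum_range (fun y0 => ∑ y1 : Fin (n+1),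
      if ((x1 : ℕ) < (x0 : ℕ) ∧ 0 < (x0 : ℕ) ∧ 0 < (x1 : ℕ)) ∧ (0 < y0 ∧ 0 < (y1:ℕ)) ∧
          ((x0 : ℕ) * y0 + (x1 : ℕ) * (y1:ℕ)) = n
      then ((y0 : ℚ) ^ (a - 1) / (Nat.factorial (a - 1))) *
           ((y1 : ℚ) ^ (b - 1) / (Nat.factorial (b - 1)))
      else 0)]
    exact Finset.sum_congr rfl fun y0 _ => Fin.sum_univ_eq_sum_range (fun y1 =>
      if ((x1 : ℕ) < (x0 : ℕ) ∧ 0 < (x0 : ℕ) ∧ 0 < (x1 : ℕ)) ∧ (0 < y0 ∧ 0 < y1) ∧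
          ((x0 : ℕ) * y0 + (x1 : ℕ) * y1) = n
      then ((y0 : ℚ) ^ (a - 1) / (Nat.factorial (a - 1))) *
           ((y1 : ℚ) ^ (b - 1) / (Nat.factorial (b - 1)))
      else 0) (n+1)
  rw [Finset.sum_congr rfl (fun (x0 : Fin (n+1)) _ => Finset.sum_congr rfl
    (fun (x1 : Fin (n+1)) _ => step x0 x1))]
  rw [Fin.sum_univ_eq_sum_range (fun x0 => ∑ x1 : Fin (n+1), ∑ y0 ∈ range (n+1), ∑ y1 ∈ range (n+1),
      if (((x1:ℕ)) < x0 ∧ 0 < x0 ∧ 0 < (x1:ℕ)) ∧ (0 < y0 ∧ 0 < y1) ∧ (x0 * y0 + (x1:ℕ) * y1) = n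
      then ((y0 : ℚ) ^ (a - 1) / (Nat.factorial (a - 1))) *
           ((y1 : ℚ) ^ (b - 1) / (Nat.factorial (b - 1)))
      else 0)]
  rw [Finset.sum_congr rfl (fun x0 _ => Fin.sum_univ_eq_sum_range (fun x1 =>
      ∑ y0 ∈ range (n+1), ∑ y1 ∈ range (n+1),
      if (x1 < x0 ∧ 0 < x0 ∧ 0 < x1) ∧ (0 < y0 ∧ 0 < y1) ∧ (x0 * y0 + x1 * y1) = n
      then ((y0 : ℚ) ^ (a - 1) / (Nat.factorial (a - 1))) *
           ((y1 : ℚ) ^ (b - 1) / (Nat.factorial (b - 1)))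
      else 0) (n+1))]
  -- RHS
  rw [Qlt, Q, Finset.filter_filter, Finset.sum_filter, Finset.sum_product]
  rw [Finset.sum_congr rfl (fun p1 _ => Finset.sum_product _ _ _)]
  rw [Finset.sum_product]
  -- swap LHS middle sums: currently LHS order u1, u2, v1, v2 ; RHS order u1, v1, u2, v2
  rw [Finset.sum_congr rfl (fun x0 _ => @Finset.sum_comm ℕ ℚ ℕ _ (range (n+1)) (range (n+1))
    (fun x1 y0 => ∑ y1 ∈ range (n+1),
      if (x1 < x0 ∧ 0 < x0 ∧ 0 < x1) ∧ (0 < y0 ∧ 0 < y1) ∧ (x0 * y0 + x1 * y1) = n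
      then ((y0 : ℚ) ^ (a - 1) / (Nat.factorial (a - 1))) *
           ((y1 : ℚ) ^ (b - 1) / (Nat.factorial (b - 1)))
      else 0))]
  refine Finset.sum_congr rfl fun u1 _ => ?_
  refine Finset.sum_congr rfl fun v1 _ => ?_
  refine Finset.sum_congr rfl fun u2 _ => Finset.sum_congr rfl fun v2 _ => ?_
  exact if_congr (by tauto) rfl rfl

lemma sum_S1_antidiag (n : ℕ) (f g : ℕ × ℕ → ℚ) :
    ∑ m ∈ antidiagonal n, (∑ p ∈ S1 m.1, f p) * (∑ q ∈ S1 m.2, g q) =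
      ∑ p ∈ Q n, f p.1 * g p.2 := by
  have h1 : ∀ m ∈ antidiagonal n, (∑ p ∈ S1 m.1, f p) * (∑ q ∈ S1 m.2, g q)
      = ∑ pq ∈ S1 m.1 ×ˢ S1 m.2, f pq.1 * g pq.2 := by
    intro m _
    rw [Finset.sum_mul_sum, Finset.sum_product]
  rw [Finset.sum_congr rfl h1]
  rw [Finset.sum_sigma' (antidiagonal n) (fun m => S1 m.1 ×ˢ S1 m.2) (fun _ pq => f pq.1 * g pq.2)]
  refine Finset.sum_nbij' (fun x => x.2) (fun p => ⟨(p.1.1 * p.1.2, p.2.1 * p.2.2), p⟩)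
    ?_ ?_ ?_ ?_ ?_
  · rintro ⟨m, pq⟩ hm
    rw [Finset.mem_sigma, Finset.HasAntidiagonal.mem_antidiagonal, Finset.mem_product] at hm
    obtain ⟨hs, hp, hq⟩ := hm
    rw [mem_S1] at hp hq
    rw [mem_Q]
    exact ⟨hp.1, hp.2.1, hq.1, hq.2.1, by rw [hp.2.2, hq.2.2, hs]⟩
  · intro p hp
    rw [mem_Q] at hp
    rw [Finset.mem_sigma, Finset.HasAntidiagonal.mem_antidiagonal, Finset.mem_product, mem_S1, mem_S1]
    exact ⟨hp.2.2.2.2, ⟨hp.1, hp.2.1, rfl⟩, hp.2.2.1, hp.2.2.2.1, rfl⟩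
  · rintro ⟨m, pq⟩ hm
    rw [Finset.mem_sigma, Finset.HasAntidiagonal.mem_antidiagonal, Finset.mem_product] at hm
    obtain ⟨hs, hp, hq⟩ := hm
    rw [mem_S1] at hp hq
    simp only [Sigma.mk.inj_iff, heq_eq_eq, and_true]
    rw [hp.2.2, hq.2.2]
  · intro p _; rfl
  · intro x _; rfl

lemma vandermonde_aux (e1 e2 : ℕ) (x y : ℚ) :
    ∑ a ∈ Finset.Icc 1 (e1+e2+1), ((a-1).choose e1 : ℚ) *
        (x^(a-1)/(Nat.factorial (a-1)) * (y^(e1+e2+1-a)/(Nat.factorial (e1+e2+1-a)))) =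
      x^e1*(x+y)^e2/(Nat.factorial e1 * Nat.factorial e2) := by
  have hsub : Finset.Icc (e1+1) (e1+e2+1) ⊆ Finset.Icc 1 (e1+e2+1) :=
    Finset.Icc_subset_Icc (by omega) le_rfl
  rw [← Finset.sum_subset hsub (by
    intro a ha hna
    rw [Finset.mem_Icc] at ha
    rw [Finset.mem_Icc] at hna
    have : a - 1 < e1 := by omega
    rw [Nat.choose_eq_zero_of_lt this]
    norm_num)]
  rw [add_pow, Finset.mul_sum, Finset.sum_div]
  refine Finset.sum_nbij' (fun a => a - (e1+1)) (fun m => m + e1 + 1) ?_ ?_ ?_ ?_ ?_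
  · intro a ha; rw [Finset.mem_Icc] at ha; rw [Finset.mem_range]; omega
  · intro m hm; rw [Finset.mem_range] at hm; rw [Finset.mem_Icc]; omega
  · intro a ha; rw [Finset.mem_Icc] at ha; omega
  · intro m hm; rw [Finset.mem_range] at hm; omega
  · intro a ha
    rw [Finset.mem_Icc] at ha
    obtain ⟨m, rfl⟩ : ∃ m, a = m + e1 + 1 := ⟨a - e1 - 1, by omega⟩
    rw [show m + e1 + 1 - (e1 + 1) = m from by omega,
        show m + e1 + 1 - 1 = e1 + m from by omega,
        show e1 + e2 + 1 - (m + e1 + 1) = e2 - m from by omega]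
    have hmle : m ≤ e2 := by omega
    have hn1 : (e1+m).choose e1 * Nat.factorial e1 * Nat.factorial m = Nat.factorial (e1+m) := by
      have := Nat.choose_mul_factorial_mul_factorial (Nat.le_add_right e1 m)
      simpa [Nat.add_sub_cancel_left] using this
    have hn2 : e2.choose m * Nat.factorial m * Nat.factorial (e2-m) = Nat.factorial e2 :=
      Nat.choose_mul_factorial_mul_factorial hmle
    have hq1 : ((e1+m).choose e1 : ℚ) * (Nat.factorial e1) * (Nat.factorial m)
        = (Nat.factorial (e1+m)) := by exact_mod_cast hn1
    have hq2 : (e2.choose m : ℚ) * (Nat.factorial m) * (Nat.factorial (e2-m))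
        = (Nat.factorial e2) := by exact_mod_cast hn2
    have hkey : ((e1+m).choose e1 : ℚ) * (Nat.factorial e1 * Nat.factorial e2)
        = (e2.choose m : ℚ) * ((Nat.factorial (e1+m)) * (Nat.factorial (e2-m))) := by
      rw [← hq2, ← hq1]; ring
    have f0 : ∀ k : ℕ, ((Nat.factorial k : ℚ)) ≠ 0 := fun k => Nat.cast_ne_zero.2 (Nat.factorial_ne_zero k)
    rw [pow_add]
    field_simp
    linear_combination (x^e1*x^m*y^(e2-m)) * hkey

lemma sum_Qlt_to_Qvlt (n : ℕ) (G : ℕ → ℕ → ℚ) :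
    ∑ p ∈ Qlt n, G p.1.2 (p.1.2 + p.2.2) = ∑ p ∈ Qvlt n, G p.1.2 p.2.2 := by
  refine Finset.sum_nbij' (fun p => ((p.1.1 - p.2.1, p.1.2), (p.2.1, p.1.2 + p.2.2)))
    (fun p => ((p.1.1 + p.2.1, p.1.2), (p.2.1, p.2.2 - p.1.2))) ?_ ?_ ?_ ?_ ?_
  · intro p hp
    rw [mem_Qlt, mem_Q] at hp
    obtain ⟨⟨h1, h2, h3, h4, h5⟩, h6⟩ := hp
    rw [mem_Qvlt, mem_Q]
    obtain ⟨t, ht⟩ : ∃ t, p.1.1 = p.2.1 + t := ⟨p.1.1 - p.2.1, by omega⟩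
    refine ⟨⟨by dsimp only; omega, h2, h3, by dsimp only; omega, ?_⟩, by dsimp only; omega⟩
    dsimp only
    rw [show p.1.1 - p.2.1 = t from by omega, ← h5, ht]
    ring
  · intro p hp
    rw [mem_Qvlt, mem_Q] at hp
    obtain ⟨⟨h1, h2, h3, h4, h5⟩, h6⟩ := hp
    rw [mem_Qlt, mem_Q]
    obtain ⟨t, ht⟩ : ∃ t, p.2.2 = p.1.2 + t := ⟨p.2.2 - p.1.2, by omega⟩
    refine ⟨⟨by dsimp only; omega, h2, h3, by dsimp only; omega, ?_⟩, by dsimp only; omega⟩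
    dsimp only
    rw [show p.2.2 - p.1.2 = t from by omega, ← h5, ht]
    ring
  · intro p hp
    rw [mem_Qlt, mem_Q] at hp
    obtain ⟨⟨h1, h2, h3, h4, h5⟩, h6⟩ := hp
    have e1 : p.1.1 - p.2.1 + p.2.1 = p.1.1 := by omega
    have e2 : p.1.2 + p.2.2 - p.1.2 = p.2.2 := by omega
    ext <;> dsimp only <;> omega
  · intro p hp
    rw [mem_Qvlt, mem_Q] at hp
    obtain ⟨⟨h1, h2, h3, h4, h5⟩, h6⟩ := hp
    ext <;> dsimp only <;> omega
  · intro p _; rfl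

lemma sum_Qvlt_to_Qvgt (n : ℕ) (G : ℕ → ℕ → ℚ) :
    ∑ p ∈ Qvlt n, G p.1.2 p.2.2 = ∑ p ∈ Qvgt n, G p.2.2 p.1.2 := by
  refine Finset.sum_nbij' (fun p => (p.2, p.1)) (fun p => (p.2, p.1)) ?_ ?_ ?_ ?_ ?_
  · intro p hp
    rw [mem_Qvlt, mem_Q] at hp
    rw [mem_Qvgt, mem_Q]
    obtain ⟨⟨h1, h2, h3, h4, h5⟩, h6⟩ := hp
    exact ⟨⟨h3, h4, h1, h2, by dsimp only; omega⟩, h6⟩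
  · intro p hp
    rw [mem_Qvgt, mem_Q] at hp
    rw [mem_Qvlt, mem_Q]
    obtain ⟨⟨h1, h2, h3, h4, h5⟩, h6⟩ := hp
    exact ⟨⟨h3, h4, h1, h2, by dsimp only; omega⟩, h6⟩
  · intro p _; rfl
  · intro p _; rfl
  · intro p _; rfl

lemma Q_split (n : ℕ) (F : (ℕ × ℕ) × ℕ × ℕ → ℚ) :
    ∑ p ∈ Q n, F p = ∑ p ∈ Qvlt n, F p + ∑ p ∈ Qvgt n, F p + ∑ p ∈ Qveq n, F p := by
  classical
  rw [← Finset.sum_filter_add_sum_filter_not (Q n) (fun p => p.1.2 < p.2.2) F]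
  rw [← Finset.sum_filter_add_sum_filter_not ((Q n).filter (fun p => ¬ p.1.2 < p.2.2))
    (fun p => p.2.2 < p.1.2) F]
  rw [Finset.filter_filter, Finset.filter_filter]
  have hB : Finset.filter (fun a : (ℕ × ℕ) × ℕ × ℕ => ¬a.1.2 < a.2.2 ∧ a.2.2 < a.1.2) (Q n)
      = Qvgt n := by
    rw [Qvgt]; apply Finset.filter_congr; intro p _; constructor
    · rintro ⟨_, h⟩; exact h
    · intro h; exact ⟨by omega, h⟩
  have hC : Finset.filter (fun a : (ℕ × ℕ) × ℕ × ℕ => ¬a.1.2 < a.2.2 ∧ ¬a.2.2 < a.1.2) (Q n)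
      = Qveq n := by
    rw [Qveq]; apply Finset.filter_congr; intro p _; omega
  rw [hB, hC, ← add_assoc]
  rfl

lemma sum_Qveq (n : ℕ) (g : ℕ → ℚ) :
    ∑ p ∈ Qveq n, g p.1.2 = ∑ q ∈ S1 n, ((q.1 : ℚ) - 1) * g q.2 := by
  have h1 : ∀ q ∈ S1 n, ((q.1 : ℚ) - 1) * g q.2 = ∑ _a ∈ Finset.Ico 1 q.1, g q.2 := by
    intro q hq
    rw [mem_S1] at hq
    rw [Finset.sum_const, Nat.card_Ico, nsmul_eq_mul]
    congr 1
    have : (1:ℕ) ≤ q.1 := hq.1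
    push_cast [this]
    ring
  rw [Finset.sum_congr rfl h1]
  rw [Finset.sum_sigma' (S1 n) (fun q => Finset.Ico 1 q.1) (fun q _ => g q.2)]
  refine (Finset.sum_nbij' (fun (x : Σ _q : ℕ × ℕ, ℕ) => ((x.2, x.1.2), (x.1.1 - x.2, x.1.2)))
    (fun p => (⟨(p.1.1 + p.2.1, p.1.2), p.1.1⟩ : Σ _q : ℕ × ℕ, ℕ)) ?_ ?_ ?_ ?_ ?_).symm
  · intro x hx
    rw [Finset.mem_sigma, mem_S1, Finset.mem_Ico] at hx
    obtain ⟨⟨h1', h2, h3⟩, ha1, ha2⟩ := hx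
    rw [mem_Qveq, mem_Q]
    refine ⟨⟨by dsimp only; omega, by dsimp only; omega, by dsimp only; omega,
      by dsimp only; omega, ?_⟩, rfl⟩
    dsimp only
    rw [← h3]
    obtain ⟨t, ht⟩ : ∃ t, x.1.1 = x.2 + t := ⟨x.1.1 - x.2, by omega⟩
    rw [show x.1.1 - x.2 = t from by omega, ht]
    ring
  · intro p hp
    rw [mem_Qveq, mem_Q] at hp
    obtain ⟨⟨h1', h2, h3, h4, h5⟩, h6⟩ := hp
    rw [Finset.mem_sigma, mem_S1, Finset.mem_Ico]
    refine ⟨⟨by dsimp only; omega, h2, ?_⟩, by dsimp only; omega, by dsimp only; omega⟩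
    dsimp only
    rw [← h5, h6]
    ring
  · intro x hx
    rw [Finset.mem_sigma, mem_S1, Finset.mem_Ico] at hx
    obtain ⟨⟨h1', h2, h3⟩, ha1, ha2⟩ := hx
    refine Sigma.ext ?_ (heq_of_eq ?_)
    · dsimp only
      ext <;> dsimp only <;> omega
    · dsimp only
  · intro p hp
    rw [mem_Qveq, mem_Q] at hp
    obtain ⟨⟨h1', h2, h3, h4, h5⟩, h6⟩ := hp
    ext <;> dsimp only <;> omega
  · intro x _; rfl

theorem qd_bracket_formula (s1 s2 : ℕ) (h1 : 1 ≤ s1) (h2 : 1 ≤ s2) (h : 2 < s1 + s2) :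
    (((s1 + s2 - 2).choose (s1 - 1) : ℚ) / ((s1 + s2 - 2 : ℕ) : ℚ)) •
        qd (bracket ![s1 + s2 - 2]) =
      bracket ![s1] * bracket ![s2]
      + (((s1 + s2 - 2).choose (s1 - 1) : ℚ)) • bracket ![s1 + s2 - 1]
      - ∑ a ∈ Finset.Icc 1 (s1 + s2 - 1),
          ((((a - 1).choose (s1 - 1) : ℚ)) + (((a - 1).choose (s2 - 1) : ℚ))) •
            bracket ![a, s1 + s2 - a] := by
  obtain ⟨e1, rfl⟩ : ∃ e, s1 = e + 1 := ⟨s1 - 1, by omega⟩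
  obtain ⟨e2, rfl⟩ : ∃ e, s2 = e + 1 := ⟨s2 - 1, by omega⟩
  have hs1 : 1 ≤ e1 + e2 := by omega
  rw [show e1 + 1 + (e2 + 1) - 2 = e1 + e2 from by omega,
      show e1 + 1 - 1 = e1 from by omega,
      show e2 + 1 - 1 = e2 from by omega,
      show e1 + 1 + (e2 + 1) - 1 = e1 + e2 + 1 from by omega]
  refine PowerSeries.ext fun n => ?_
  -- notation
  have f0 : ∀ k : ℕ, ((Nat.factorial k : ℚ)) ≠ 0 := fun k => Nat.cast_ne_zero.2 (Nat.factorial_ne_zero k)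
  -- the basic choose identity
  have hCQ : (((e1+e2).choose e1 : ℕ) : ℚ) * ((Nat.factorial e1 : ℚ) * (Nat.factorial e2 : ℚ))
      = ((Nat.factorial (e1+e2) : ℕ) : ℚ) := by
    have := Nat.choose_mul_factorial_mul_factorial (Nat.le_add_right e1 e2)
    rw [Nat.add_sub_cancel_left] at this
    exact_mod_cast congrArg (fun x : ℕ => (x : ℚ)) (by rw [← this]; ring)
  -- LHS
  have hL : (((e1+e2).choose e1 : ℕ) : ℚ) / ((e1 + e2 : ℕ) : ℚ) *
        ((n : ℚ) * ∑ q ∈ S1 n, (q.2 : ℚ) ^ (e1+e2-1) / (Nat.factorial (e1+e2-1)))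
      = ∑ q ∈ S1 n, (q.1 : ℚ) * (q.2 : ℚ) ^ (e1+e2) / ((Nat.factorial e1 : ℚ) * Nat.factorial e2) := by
    obtain ⟨k, hk⟩ : ∃ k, e1 + e2 = k + 1 := ⟨e1 + e2 - 1, by omega⟩
    rw [hk, Nat.add_sub_cancel, Finset.mul_sum, Finset.mul_sum]
    refine Finset.sum_congr rfl fun q hq => ?_
    rw [mem_S1] at hq
    have hn : (n : ℚ) = (q.1 : ℚ) * q.2 := by exact_mod_cast hq.2.2.symm
    have hCk : (((k+1).choose e1 : ℕ) : ℚ) * ((Nat.factorial e1 : ℚ) * Nat.factorial e2)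
        = ((k+1 : ℕ) : ℚ) * (Nat.factorial k : ℚ) := by
      rw [← hk, hCQ, hk]
      exact_mod_cast congrArg (fun x : ℕ => (x : ℚ)) (Nat.factorial_succ k)
    have hk0 : ((k+1 : ℕ) : ℚ) ≠ 0 := by positivity
    rw [hn]
    push_cast at hCk hk0 ⊢
    field_simp
    linear_combination ((q.1 : ℚ) * (q.2 : ℚ) ^ (k+1)) * hCk
  -- product coefficient
  have hP : (PowerSeries.coeff n) (bracket ![e1+1] * bracket ![e2+1]) =
      ∑ p ∈ Q n, (p.1.2 : ℚ) ^ (e1+1-1) / (Nat.factorial (e1+1-1)) *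
        ((p.2.2 : ℚ) ^ (e2+1-1) / (Nat.factorial (e2+1-1))) := by
    rw [PowerSeries.coeff_mul,
      Finset.sum_congr rfl (fun m _ => by rw [coeff_bracket_one (e1+1) m.1, coeff_bracket_one (e2+1) m.2]),
      sum_S1_antidiag n (fun p => (p.2 : ℚ) ^ (e1+1-1) / (Nat.factorial (e1+1-1)))
        (fun p => (p.2 : ℚ) ^ (e2+1-1) / (Nat.factorial (e2+1-1)))]
  -- coefficient of the subtracted sum
  have hcoeffa : ∀ a ∈ Finset.Icc 1 (e1+e2+1), (PowerSeries.coeff n)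
      (bracket ![a, e1 + 1 + (e2 + 1) - a]) =
      ∑ p ∈ Qlt n, (p.1.2 : ℚ) ^ (a-1) / (Nat.factorial (a-1)) *
        ((p.2.2 : ℚ) ^ (e1+e2+1-a) / (Nat.factorial (e1+e2+1-a))) := by
    intro a ha
    rw [Finset.mem_Icc] at ha
    rw [coeff_bracket_two, show e1 + 1 + (e2 + 1) - a - 1 = e1+e2+1-a from by omega]
  have hW : (PowerSeries.coeff n) (∑ a ∈ Finset.Icc 1 (e1+e2+1),
        (((a-1).choose e1 : ℚ) + ((a-1).choose e2 : ℚ)) • bracket ![a, e1 + 1 + (e2 + 1) - a]) =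
      ∑ a ∈ Finset.Icc 1 (e1+e2+1), (((a-1).choose e1 : ℚ) + ((a-1).choose e2 : ℚ)) *
        ∑ p ∈ Qlt n, (p.1.2 : ℚ) ^ (a-1) / (Nat.factorial (a-1)) *
          ((p.2.2 : ℚ) ^ (e1+e2+1-a) / (Nat.factorial (e1+e2+1-a))) := by
    rw [map_sum]
    exact Finset.sum_congr rfl fun a ha => by rw [map_smul, smul_eq_mul, hcoeffa a ha]
  -- evaluate the subtracted sum
  have hsubtotal : ∑ a ∈ Finset.Icc 1 (e1+e2+1), (((a-1).choose e1 : ℚ) + ((a-1).choose e2 : ℚ)) *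
        ∑ p ∈ Qlt n, (p.1.2 : ℚ) ^ (a-1) / (Nat.factorial (a-1)) *
          ((p.2.2 : ℚ) ^ (e1+e2+1-a) / (Nat.factorial (e1+e2+1-a))) =
      (∑ p ∈ Qvlt n, (p.1.2 : ℚ) ^ e1 / (Nat.factorial e1) * ((p.2.2 : ℚ) ^ e2 / (Nat.factorial e2)))
      + ∑ p ∈ Qvgt n, (p.1.2 : ℚ) ^ e1 / (Nat.factorial e1) * ((p.2.2 : ℚ) ^ e2 / (Nat.factorial e2)) := by
    rw [Finset.sum_congr rfl (fun a (_ : a ∈ Finset.Icc 1 (e1+e2+1)) => Finset.mul_sum _ _ _)]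
    rw [Finset.sum_comm]
    have hper : ∀ p ∈ Qlt n, (∑ a ∈ Finset.Icc 1 (e1+e2+1),
        (((a-1).choose e1 : ℚ) + ((a-1).choose e2 : ℚ)) *
          ((p.1.2 : ℚ) ^ (a-1) / (Nat.factorial (a-1)) *
            ((p.2.2 : ℚ) ^ (e1+e2+1-a) / (Nat.factorial (e1+e2+1-a))))) =
        (((p.1.2 : ℕ) : ℚ) ^ e1 * (((p.1.2 + p.2.2 : ℕ) : ℕ) : ℚ) ^ e2
          + ((p.1.2 : ℕ) : ℚ) ^ e2 * (((p.1.2 + p.2.2 : ℕ) : ℕ) : ℚ) ^ e1) /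
            ((Nat.factorial e1 : ℚ) * Nat.factorial e2) := by
      intro p _
      have hv1 := vandermonde_aux e1 e2 (p.1.2 : ℚ) (p.2.2 : ℚ)
      have hv2 := vandermonde_aux e2 e1 (p.1.2 : ℚ) (p.2.2 : ℚ)
      rw [add_comm e2 e1, mul_comm ((Nat.factorial e2 : ℚ)) ((Nat.factorial e1 : ℚ))] at hv2
      calc ∑ a ∈ Finset.Icc 1 (e1+e2+1),
            (((a-1).choose e1 : ℚ) + ((a-1).choose e2 : ℚ)) *
              ((p.1.2 : ℚ) ^ (a-1) / (Nat.factorial (a-1)) *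
                ((p.2.2 : ℚ) ^ (e1+e2+1-a) / (Nat.factorial (e1+e2+1-a))))
          = ∑ a ∈ Finset.Icc 1 (e1+e2+1),
            (((a-1).choose e1 : ℚ) * ((p.1.2 : ℚ) ^ (a-1) / (Nat.factorial (a-1)) *
                ((p.2.2 : ℚ) ^ (e1+e2+1-a) / (Nat.factorial (e1+e2+1-a))))
              + ((a-1).choose e2 : ℚ) * ((p.1.2 : ℚ) ^ (a-1) / (Nat.factorial (a-1)) *
                ((p.2.2 : ℚ) ^ (e1+e2+1-a) / (Nat.factorial (e1+e2+1-a))))) :=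
            Finset.sum_congr rfl fun a _ => by ring
        _ = _ := by
            rw [Finset.sum_add_distrib, hv1, hv2]
            push_cast
            field_simp
            try ring
    rw [Finset.sum_congr rfl hper]
    rw [sum_Qlt_to_Qvlt n (fun x y => ((x : ℚ) ^ e1 * (y : ℚ) ^ e2 + (x : ℚ) ^ e2 * (y : ℚ) ^ e1) /
      ((Nat.factorial e1 : ℚ) * Nat.factorial e2))]

    have hsplit : ∀ p ∈ Qvlt n, (((p.1.2 : ℕ) : ℚ) ^ e1 * ((p.2.2 : ℕ) : ℚ) ^ e2
          + ((p.1.2 : ℕ) : ℚ) ^ e2 * ((p.2.2 : ℕ) : ℚ) ^ e1) /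
            ((Nat.factorial e1 : ℚ) * Nat.factorial e2) =
        (p.1.2 : ℚ) ^ e1 / (Nat.factorial e1) * ((p.2.2 : ℚ) ^ e2 / (Nat.factorial e2))
          + (p.1.2 : ℚ) ^ e2 * (p.2.2 : ℚ) ^ e1 / ((Nat.factorial e1 : ℚ) * Nat.factorial e2) := by
      intro p _
      field_simp
      try ring
    rw [Finset.sum_congr rfl hsplit, Finset.sum_add_distrib]
    congr 1
    rw [sum_Qvlt_to_Qvgt n (fun x y => (x : ℚ) ^ e2 * (y : ℚ) ^ e1 /
      ((Nat.factorial e1 : ℚ) * Nat.factorial e2))]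
    refine Finset.sum_congr rfl fun p _ => ?_
    field_simp
  -- the equal-v diagonal
  have hveq : ∑ p ∈ Qveq n, (p.1.2 : ℚ) ^ e1 / (Nat.factorial e1) *
        ((p.2.2 : ℚ) ^ e2 / (Nat.factorial e2)) =
      ∑ q ∈ S1 n, ((q.1 : ℚ) - 1) *
        ((q.2 : ℚ) ^ (e1+e2) / ((Nat.factorial e1 : ℚ) * Nat.factorial e2)) := by
    have hstep : ∀ p ∈ Qveq n, (p.1.2 : ℚ) ^ e1 / (Nat.factorial e1) *
        ((p.2.2 : ℚ) ^ e2 / (Nat.factorial e2)) =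
        ((p.1.2 : ℕ) : ℚ) ^ (e1+e2) / ((Nat.factorial e1 : ℚ) * Nat.factorial e2) := by
      intro p hp
      rw [mem_Qveq] at hp
      rw [← hp.2, pow_add]
      field_simp
      try ring
    rw [Finset.sum_congr rfl hstep, sum_Qveq n
      (fun v => (v : ℚ) ^ (e1+e2) / ((Nat.factorial e1 : ℚ) * Nat.factorial e2))]
  -- the [s+1] term
  have hE : (((e1+e2).choose e1 : ℕ) : ℚ) *
        (∑ q ∈ S1 n, (q.2 : ℚ) ^ (e1+e2) / (Nat.factorial (e1+e2))) =
      ∑ q ∈ S1 n, (q.2 : ℚ) ^ (e1+e2) / ((Nat.factorial e1 : ℚ) * Nat.factorial e2) := by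
    rw [Finset.mul_sum]
    refine Finset.sum_congr rfl fun q _ => ?_
    field_simp
    linear_combination ((q.2 : ℚ) ^ (e1+e2)) * hCQ
  -- final assembly
  rw [map_smul, smul_eq_mul, map_sub, map_add, map_smul, smul_eq_mul]
  rw [qd, PowerSeries.coeff_mk, coeff_bracket_one (e1+e2) n, coeff_bracket_one (e1+e2+1) n, hP, hW]
  simp only [Nat.add_sub_cancel]
  rw [hL, hsubtotal, hE,
    Q_split n (fun p => (p.1.2 : ℚ) ^ e1 / (Nat.factorial e1) *
      ((p.2.2 : ℚ) ^ e2 / (Nat.factorial e2))), hveq]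
  have hfin : ∑ q ∈ S1 n, (q.1 : ℚ) * (q.2 : ℚ) ^ (e1+e2) /
        ((Nat.factorial e1 : ℚ) * Nat.factorial e2) =
      (∑ q ∈ S1 n, ((q.1 : ℚ) - 1) *
        ((q.2 : ℚ) ^ (e1+e2) / ((Nat.factorial e1 : ℚ) * Nat.factorial e2)))
      + ∑ q ∈ S1 n, (q.2 : ℚ) ^ (e1+e2) / ((Nat.factorial e1 : ℚ) * Nat.factorial e2) := by
    rw [← Finset.sum_add_distrib]
    refine Finset.sum_congr rfl fun q _ => ?_
    ring
  rw [hfin]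
  ring
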